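/- Let λ be a partition with n parts and let η and τ be two distinct compositions, each obtained by permuting the parts of λ. For a composition ν of length n and 1 ≤ i ≤ n, define c_i(ν) = #{j > i : ν_j ≥ ν_i} + #{j < i : ν_j > ν_i}. Then the tuples (c₁(η),…,cₙ(η)) and (c₁(τ),…,cₙ(τ)) are distinct. Consequently, the eigenvalue tuples (t^{−c₁(ν)},…,t^{−cₙ(ν)}) of the Cherednik–Dunkl operators at q = 1 remain distinct as ν ranges over the rearrangements of a fixed partition λ. -/
import Mathlib


/-- The set `S_λ` of compositions obtained by permuting the parts of `lam`. -/
noncomputable def SLam (n : ℕ) (lam : Fin n → ℕ) : Finset (Fin n → ℕ) :=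
  Finset.image (fun σ : Equiv.Perm (Fin n) => lam ∘ σ) Finset.univ

/-- `c_i(ν) = #{j > i : ν_j ≥ ν_i} + #{j < i : ν_j > ν_i}`. -/
def cExp (n : ℕ) (ν : Fin n → ℕ) (i : Fin n) : ℕ :=
  (Finset.univ.filter (fun j => i < j ∧ ν i ≤ ν j)).card +
    (Finset.univ.filter (fun j => j < i ∧ ν i < ν j)).card

lemma filter_perm_card (n : ℕ) (σ : Equiv.Perm (Fin n)) (p : Fin n → Prop) [DecidablePred p] :
    (Finset.univ.filter (fun j => p (σ j))).card = (Finset.univ.filter p).card :=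
  Finset.card_bij (fun j _ => σ j) (by simp) (fun a _ b _ h => σ.injective h)
    (fun b hb => ⟨σ.symm b, by simpa using hb, by simp⟩)

lemma cExp_key (n : ℕ) (lam : Fin n → ℕ)
    (hlam : ∀ i j : Fin n, i ≤ j → lam j ≤ lam i)
    (ν : Fin n → ℕ) (hν : ν ∈ SLam n lam) (i : Fin n) :
    ∃ h : cExp n ν i < n, lam ⟨cExp n ν i, h⟩ = ν i := by
  obtain ⟨σ, -, rfl⟩ := Finset.mem_image.mp hν
  set ν : Fin n → ℕ := lam ∘ σ with hνdef
  set v : ℕ := ν i with hv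
  set B : ℕ := (Finset.univ.filter (fun k => v < lam k)).card with hB
  set A : ℕ := (Finset.univ.filter (fun k => v ≤ lam k)).card with hA
  set E : ℕ := (Finset.univ.filter (fun j => i < j ∧ ν j = v)).card with hE
  set F : ℕ := (Finset.univ.filter (fun j => ν j = v)).card with hF
  -- Step 1 : cExp = B + E
  have hsplit : cExp n ν i = B + E := by
    have h1 : (Finset.univ.filter (fun j => i < j ∧ v ≤ ν j))
        = (Finset.univ.filter (fun j => i < j ∧ v < ν j))
          ∪ (Finset.univ.filter (fun j => i < j ∧ ν j = v)) := by
      ext j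
      simp only [Finset.mem_filter, Finset.mem_union, Finset.mem_univ, true_and]
      constructor
      · rintro ⟨h, hle⟩
        rcases lt_or_eq_of_le hle with h' | h'
        · exact Or.inl ⟨h, h'⟩
        · exact Or.inr ⟨h, h'.symm⟩
      · rintro (⟨h, h'⟩ | ⟨h, h'⟩)
        · exact ⟨h, le_of_lt h'⟩
        · exact ⟨h, le_of_eq h'.symm⟩
    have hd1 : Disjoint (Finset.univ.filter (fun j => i < j ∧ v < ν j))
        (Finset.univ.filter (fun j => i < j ∧ ν j = v)) := by
      rw [Finset.disjoint_left]
      intro j hj1 hj2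
      simp only [Finset.mem_filter] at hj1 hj2
      omega
    have h2 : (Finset.univ.filter (fun j => i < j ∧ v < ν j))
        ∪ (Finset.univ.filter (fun j => j < i ∧ v < ν j))
        = Finset.univ.filter (fun j => v < ν j) := by
      ext j
      simp only [Finset.mem_filter, Finset.mem_union, Finset.mem_univ, true_and]
      constructor
      · rintro (⟨_, h'⟩ | ⟨_, h'⟩) <;> exact h'
      · intro h'
        rcases lt_trichotomy i j with h | h | h
        · exact Or.inl ⟨h, h'⟩
        · exfalso; rw [← h] at h'; exact lt_irrefl _ h'
        · exact Or.inr ⟨h, h'⟩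
    have hd2 : Disjoint (Finset.univ.filter (fun j => i < j ∧ v < ν j))
        (Finset.univ.filter (fun j => j < i ∧ v < ν j)) := by
      rw [Finset.disjoint_left]
      intro j hj1 hj2
      simp only [Finset.mem_filter] at hj1 hj2
      exact absurd (hj1.2.1.trans hj2.2.1) (lt_irrefl i)
    have hBν : (Finset.univ.filter (fun j => v < ν j)).card = B := by
      rw [hB]
      exact filter_perm_card n σ (fun k => v < lam k)
    have := Finset.card_union_of_disjoint hd1
    have := Finset.card_union_of_disjoint hd2
    unfold cExp
    rw [← hv, h1, Finset.card_union_of_disjoint hd1]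
    rw [add_right_comm, ← Finset.card_union_of_disjoint hd2, h2, hBν]
  -- Step 2 : A = B + F
  have hAeq : A = B + F := by
    have hAν : (Finset.univ.filter (fun j => v ≤ ν j)).card = A := by
      rw [hA]; exact filter_perm_card n σ (fun k => v ≤ lam k)
    have hBν : (Finset.univ.filter (fun j => v < ν j)).card = B := by
      rw [hB]; exact filter_perm_card n σ (fun k => v < lam k)
    have h1 : (Finset.univ.filter (fun j => v ≤ ν j))
        = (Finset.univ.filter (fun j => v < ν j))
          ∪ (Finset.univ.filter (fun j => ν j = v)) := by
      ext j
      simp only [Finset.mem_filter, Finset.mem_union, Finset.mem_univ, true_and]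
      omega
    have hd : Disjoint (Finset.univ.filter (fun j => v < ν j))
        (Finset.univ.filter (fun j => ν j = v)) := by
      rw [Finset.disjoint_left]
      intro j hj1 hj2
      simp only [Finset.mem_filter] at hj1 hj2
      omega
    rw [← hAν, h1, Finset.card_union_of_disjoint hd, hBν, hF]
  -- Step 3 : E < F
  have hEF : E < F := by
    have hi : i ∈ Finset.univ.filter (fun j => ν j = v) := by
      simp [hv]
    have hsub : (Finset.univ.filter (fun j => i < j ∧ ν j = v))
        ⊆ (Finset.univ.filter (fun j => ν j = v)).erase i := by
      intro j hj
      simp only [Finset.mem_filter, Finset.mem_univ, true_and] at hj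
      rw [Finset.mem_erase]
      exact ⟨hj.1.ne', by simp [hj.2]⟩
    exact lt_of_le_of_lt (Finset.card_le_card hsub) (Finset.card_erase_lt_of_mem hi)
  have hcA : cExp n ν i < A := by rw [hsplit, hAeq]; omega
  have hAn : A ≤ n := by
    have := Finset.card_filter_le (Finset.univ : Finset (Fin n)) (fun k => v ≤ lam k)
    simpa [hA] using this
  have hc : cExp n ν i < n := lt_of_lt_of_le hcA hAn
  refine ⟨hc, ?_⟩
  set c : Fin n := ⟨cExp n ν i, hc⟩ with hcdef
  rcases lt_trichotomy (lam c) v with hlt | heq | hgt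
  · exfalso
    have hsub : (Finset.univ.filter (fun k => v ≤ lam k)) ⊆ Finset.Iio c := by
      intro k hk
      simp only [Finset.mem_filter, Finset.mem_univ, true_and] at hk
      rw [Finset.mem_Iio]
      by_contra hcon
      push_neg at hcon
      exact absurd (le_trans hk (hlam c k hcon)) (not_le_of_gt hlt)
    have := Finset.card_le_card hsub
    rw [Fin.card_Iio] at this
    have : A ≤ cExp n ν i := by simpa [hA] using this
    omega
  · exact heq
  · exfalso
    have hsub : Finset.Iic c ⊆ (Finset.univ.filter (fun k => v < lam k)) := by
      intro k hk
      rw [Finset.mem_Iic] at hk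
      simp only [Finset.mem_filter, Finset.mem_univ, true_and]
      exact lt_of_lt_of_le hgt (hlam k c hk)
    have := Finset.card_le_card hsub
    rw [Fin.card_Iic] at this
    have : cExp n ν i + 1 ≤ B := by simpa [hB] using this
    omega

lemma Xpow_neg_inj (a b : ℕ)
    (h : (RatFunc.X : RatFunc ℚ) ^ (-(a : ℤ)) = (RatFunc.X : RatFunc ℚ) ^ (-(b : ℤ))) :
    a = b := by
  have h1 : (RatFunc.X : RatFunc ℚ) ^ (a : ℤ) = (RatFunc.X : RatFunc ℚ) ^ (b : ℤ) := by
    have := congrArg (·⁻¹) h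
    simpa [zpow_neg] using this
  rw [zpow_natCast, zpow_natCast] at h1
  have h2 : (algebraMap (Polynomial ℚ) (RatFunc ℚ)) (Polynomial.X ^ a)
      = algebraMap (Polynomial ℚ) (RatFunc ℚ) (Polynomial.X ^ b) := by
    simpa [map_pow, RatFunc.algebraMap_X] using h1
  have h3 := RatFunc.algebraMap_injective ℚ h2
  have := congrArg Polynomial.natDegree h3
  simpa using this

/-- Remark 3.6 of the paper: two distinct rearrangements `η ≠ τ` of the same
partition `λ` have distinct exponent tuples `(c₁(ν),…,cₙ(ν))`; consequently the
eigenvalue tuples `(t^{−c₁(ν)},…,t^{−cₙ(ν)})` of the Cherednik–Dunkl operators at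
`q = 1` (as rational functions of `t`) remain distinct. -/
theorem stmt_8 (n : ℕ) (lam : Fin n → ℕ)
    (hlam : ∀ i j : Fin n, i ≤ j → lam j ≤ lam i)
    (η τ : Fin n → ℕ) (hη : η ∈ SLam n lam) (hτ : τ ∈ SLam n lam) (hne : η ≠ τ) :
    (fun i => cExp n η i) ≠ (fun i => cExp n τ i) ∧
    (fun i => (RatFunc.X : RatFunc ℚ) ^ (-(cExp n η i : ℤ)))
      ≠ (fun i => (RatFunc.X : RatFunc ℚ) ^ (-(cExp n τ i : ℤ))) := by
  have h1 : (fun i => cExp n η i) ≠ (fun i => cExp n τ i) := by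
    intro hcon
    apply hne
    funext i
    obtain ⟨hη1, eη⟩ := cExp_key n lam hlam η hη i
    obtain ⟨hτ1, eτ⟩ := cExp_key n lam hlam τ hτ i
    have hcc : cExp n η i = cExp n τ i := congrFun hcon i
    rw [← eη, ← eτ]
    congr 1
    exact Fin.ext hcc
  refine ⟨h1, ?_⟩
  intro hcon
  apply h1
  funext i
  exact Xpow_neg_inj _ _ (congrFun hcon i)
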